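/- Consider a causal chain X₁ → X₂ → ⋯ → X_p → Y at the individual level: fix functions g₂,…,g_p : {0,1} → {0,1} and h : {0,1} → {0,1}, where g_i is the individual's structural response of X_i to its parent X_{i−1} and h is the response of Y to X_p. For j ≤ i define G_{j→i} : {0,1} → {0,1} by G_{i→i}(a) = a and G_{j→i}(a) = g_i(g_{i−1}(⋯ g_{j+1}(a) ⋯)), and define H_k(a) = h(G_{k→p}(a)) (the potential value of Y under do(X_k = a)). Fix 1 ≤ k ≤ p and define: the cause condition C_k ≡ 'H_k is not constant'; the root condition R_k ≡ 'for all u, u' ∈ {0,1}^{k−1}, H_k(g_k(u_{k−1})) = H_k(g_k(u'_{k−1}))' for k ≥ 2 (under a joint intervention on X₁,…,X_{k−1}, X_k responds only to the intervened value of its parent), with R₁ holding trivially. Then C_k and R_k both hold if and only if h, g_p, g_{p−1}, …, g_{k+1} are all nonconstant and (k = 1 or g_k is constant). (Corollary: root cause for a causal chain diagram — X_k is the root cause of Y iff L_Y = L_{X_p} = ⋯ = L_{X_{k+1}} = 1 and L_{X_k} = 0, where L_{X_i} = 1 iff g_i is nonconstant, L_{X₁} = 0, and L_Y = 1 iff h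 is nonconstant.) -/
import Mathlib


/-- `Gchain g j i a = G_{j→i}(a)`: the composite structural response along the chain from
`X_j` to `X_i`, with `G_{i→i}(a) = a` and `G_{j→i}(a) = g_i(G_{j→(i−1)}(a))` for `i > j`. -/
def Gchain (g : ℕ → Bool → Bool) (j : ℕ) : ℕ → Bool → Bool
  | 0 => fun a => a
  | (i + 1) => fun a => if i + 1 ≤ j then a else g (i + 1) (Gchain g j i a)

lemma Gchain_id (g : ℕ → Bool → Bool) (k : ℕ) : ∀ i, i ≤ k → ∀ a, Gchain g k i a = a := by
  intro i
  induction i with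
  | zero => intro _ a; rfl
  | succ n ih =>
    intro hik a
    simp only [Gchain, if_pos hik]

lemma comp_nc (f s : Bool → Bool) :
    f (s true) ≠ f (s false) ↔ (f true ≠ f false ∧ s true ≠ s false) := by
  cases h1 : s true <;> cases h2 : s false <;> cases h3 : f true <;> cases h4 : f false <;>
    simp_all

lemma key (g : ℕ → Bool → Bool) (k : ℕ) :
    ∀ p, k ≤ p → ∀ h : Bool → Bool,
      (h (Gchain g k p true) ≠ h (Gchain g k p false)) ↔
        (h true ≠ h false ∧ ∀ i, k + 1 ≤ i → i ≤ p → g i true ≠ g i false) := by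
  intro p
  induction p with
  | zero =>
    intro hkp h
    interval_cases k
    constructor
    · intro hne; exact ⟨hne, fun i h1 h2 => by omega⟩
    · rintro ⟨hne, _⟩; exact hne
  | succ n ih =>
    intro hkp h
    rcases Nat.lt_or_ge k (n + 1) with hlt | hge
    · have hkn : k ≤ n := by omega
      have hG : ∀ a, Gchain g k (n + 1) a = g (n + 1) (Gchain g k n a) := by
        intro a; simp only [Gchain, if_neg (by omega : ¬ n + 1 ≤ k)]
      rw [hG, hG]
      rw [ih hkn (fun a => h (g (n + 1) a))]
      rw [comp_nc h (g (n + 1))]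
      constructor
      · rintro ⟨⟨hh, hg⟩, hrest⟩
        refine ⟨hh, fun i h1 h2 => ?_⟩
        rcases Nat.lt_or_ge i (n + 1) with hi | hi
        · exact hrest i h1 (by omega)
        · have : i = n + 1 := by omega
          subst this; exact hg
      · rintro ⟨hh, hall⟩
        exact ⟨⟨hh, hall (n + 1) (by omega) le_rfl⟩, fun i h1 h2 => hall i h1 (by omega)⟩
    · have hk : k = n + 1 := by omega
      subst hk
      rw [Gchain_id g (n + 1) (n + 1) le_rfl, Gchain_id g (n + 1) (n + 1) le_rfl]
      constructor
      · intro hne; exact ⟨hne, fun i h1 h2 => by omega⟩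
      · rintro ⟨hne, _⟩; exact hne

/-- root cause for a causal chain diagram: with `H_k(a) = h(G_{k→p}(a))`, the
cause condition (`H_k` nonconstant) and the root condition (the nested counterfactual
`H_k(g_k(u_{k−1}))` does not depend on the intervention `u ∈ {0,1}^{k−1}` on the ancestors)
hold together iff `h, g_p, …, g_{k+1}` are all nonconstant and (`k = 1` or `g_k` is
constant). -/
theorem stmt7 (p : ℕ) (g : ℕ → Bool → Bool) (h : Bool → Bool) (k : ℕ)
    (hk1 : 1 ≤ k) (hkp : k ≤ p) :
    ((∃ a b : Bool, h (Gchain g k p a) ≠ h (Gchain g k p b)) ∧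
      (∀ u u' : Fin (k - 1) → Bool, ∀ hlt : k - 2 < k - 1,
        h (Gchain g k p (g k (u ⟨k - 2, hlt⟩))) =
          h (Gchain g k p (g k (u' ⟨k - 2, hlt⟩))))) ↔
      ((h true ≠ h false) ∧
        (∀ i : ℕ, k + 1 ≤ i → i ≤ p → g i true ≠ g i false) ∧
        (k = 1 ∨ g k true = g k false)) := by
  have hkey := key g k p hkp h
  constructor
  · rintro ⟨⟨a, b, hab⟩, hroot⟩
    have hNC : h (Gchain g k p true) ≠ h (Gchain g k p false) := by
      cases a <;> cases b
      · exact absurd rfl hab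
      · exact fun e => hab e.symm
      · exact hab
      · exact absurd rfl hab
    obtain ⟨hh, hall⟩ := hkey.mp hNC
    refine ⟨hh, hall, ?_⟩
    by_cases hk : k = 1
    · exact Or.inl hk
    · right
      have hlt : k - 2 < k - 1 := by omega
      have := hroot (fun _ => true) (fun _ => false) hlt
      by_contra hne
      have hgn : h (Gchain g k p (g k true)) ≠ h (Gchain g k p (g k false)) := by
        cases h1 : g k true <;> cases h2 : g k false
        · exact absurd (h1.trans h2.symm) hne
        · exact fun e => hNC e.symm
        · exact hNC
        · exact absurd (h1.trans h2.symm) hne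
      exact hgn this
  · rintro ⟨hh, hall, hk⟩
    have hNC := hkey.mpr ⟨hh, hall⟩
    refine ⟨⟨true, false, hNC⟩, fun u u' hlt => ?_⟩
    rcases hk with hk | hk
    · subst hk; exact absurd hlt (by omega)
    · have : ∀ x y : Bool, g k x = g k y := by
        intro x y; cases x <;> cases y <;> simp [hk]
      rw [this (u ⟨k - 2, hlt⟩) (u' ⟨k - 2, hlt⟩)]
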